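/- Let T = (ℂ^×)^n act on X = (ℂ^×)^l × ℂ^k × ℂ^l × ℂ^k (n = l + k) as in the model example, with quotient map π(θ, v, β, w) = (β, v₁w¹,…,v_kw^k) onto Y = ℂ^n. For a character χ = ∑ aᵢθᵢ + ∑ bⱼχⱼ ∈ ℤ^n (in the basis of characters dual to the action), the 𝒪(Y)-module 𝒪_χ = {f ∈ 𝒪(X) : t·f = χ(t) f for all t ∈ T} is free of rank 1, generated by (∏ᵢ θᵢ^{aᵢ}) · ∏ⱼ uⱼ^{|bⱼ|}, where uⱼ = vⱼ if bⱼ ≥ 0 and uⱼ = wʲ if bⱼ < 0. -/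

import Mathlib

/-- Points of the ambient space of the model manifold `X = (ℂˣ)ˡ × ℂᵏ × ℂˡ × ℂᵏ`
(the condition `θᵢ ≠ 0` is imposed by membership in `modelSet`). -/
abbrev ModelSpace (l k : ℕ) :=
  (Fin l → ℂ) × (Fin k → ℂ) × (Fin l → ℂ) × (Fin k → ℂ)

/-- The model manifold `X`: points with all `θᵢ ≠ 0`. -/
def modelSet (l k : ℕ) : Set (ModelSpace l k) := {x | ∀ i, x.1 i ≠ 0}

/-- The action of `T = (ℂˣ)ˡ × (ℂˣ)ᵏ`: `(s,t)·(θ,v,β,w) = (sθ, tv, β, t⁻¹w)`. -/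
def modelAct (l k : ℕ) (g : (Fin l → ℂˣ) × (Fin k → ℂˣ)) (x : ModelSpace l k) :
    ModelSpace l k :=
  (fun i => (g.1 i : ℂ) * x.1 i, fun j => (g.2 j : ℂ) * x.2.1 j, x.2.2.1,
    fun j => ((g.2 j)⁻¹ : ℂˣ) * x.2.2.2 j)

/-- The quotient map `π(θ,v,β,w) = (β, v₁w¹,…,v_k wᵏ)` onto `Y = ℂˡ × ℂᵏ`. -/
def modelQuot (l k : ℕ) (x : ModelSpace l k) : (Fin l → ℂ) × (Fin k → ℂ) :=
  (x.2.2.1, fun j => x.2.1 j * x.2.2.2 j)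

/-- The character `χ = ∑ aᵢθᵢ + ∑ bⱼχⱼ` of `T`. -/
noncomputable def modelChar (l k : ℕ) (a : Fin l → ℤ) (b : Fin k → ℤ)
    (g : (Fin l → ℂˣ) × (Fin k → ℂˣ)) : ℂ :=
  (∏ i, (g.1 i : ℂ) ^ a i) * ∏ j, (g.2 j : ℂ) ^ b j

/-- The generator `(∏ θᵢ^{aᵢ}) · ∏ uⱼ^{|bⱼ|}` where `uⱼ = vⱼ` if `bⱼ ≥ 0` and
`uⱼ = wʲ` otherwise. -/
noncomputable def modelGen (l k : ℕ) (a : Fin l → ℤ) (b : Fin k → ℤ)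
    (x : ModelSpace l k) : ℂ :=
  (∏ i, x.1 i ^ a i) *
    ∏ j, (if 0 ≤ b j then x.2.1 j ^ (b j).toNat else x.2.2.2 j ^ (-(b j)).toNat)

/-- Auxiliary section of the quotient map. -/
noncomputable def modelSec (l k : ℕ) (b : Fin k → ℤ)
    (y : (Fin l → ℂ) × (Fin k → ℂ)) : ModelSpace l k :=
  (fun _ => 1, fun j => if 0 ≤ b j then 1 else y.2 j, y.1,
    fun j => if 0 ≤ b j then y.2 j else 1)

lemma modelSet_open (l k : ℕ) : IsOpen (modelSet l k) := by
  have : modelSet l k = ⋂ i, {x : ModelSpace l k | x.1 i ≠ 0} := by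
    ext x; simp [modelSet]
  rw [this]
  exact isOpen_iInter_of_finite fun i =>
    (isOpen_compl_singleton).preimage (by fun_prop : Continuous fun x : ModelSpace l k => x.1 i)

lemma modelSec_mem (l k : ℕ) (b : Fin k → ℤ) (y : (Fin l → ℂ) × (Fin k → ℂ)) :
    modelSec l k b y ∈ modelSet l k := fun i => one_ne_zero

lemma modelSec_quot (l k : ℕ) (b : Fin k → ℤ) (y : (Fin l → ℂ) × (Fin k → ℂ)) :
    modelQuot l k (modelSec l k b y) = y := by
  unfold modelQuot modelSec
  refine Prod.ext rfl (funext fun j => ?_)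
  by_cases hb : 0 ≤ b j <;> simp [hb]

lemma modelSec_gen (l k : ℕ) (a : Fin l → ℤ) (b : Fin k → ℤ)
    (y : (Fin l → ℂ) × (Fin k → ℂ)) :
    modelGen l k a b (modelSec l k b y) = 1 := by
  unfold modelGen modelSec
  simp only [one_zpow, Finset.prod_const_one, one_mul]
  refine Finset.prod_eq_one fun j _ => ?_
  by_cases hb : 0 ≤ b j <;> simp [hb]

lemma modelSec_diff (l k : ℕ) (b : Fin k → ℤ) :
    Differentiable ℂ (modelSec l k b) := by
  unfold modelSec
  refine Differentiable.prodMk (by fun_prop) (Differentiable.prodMk ?_ (Differentiable.prodMk (by fun_prop) ?_))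
  · refine differentiable_pi.mpr fun j => ?_
    by_cases hb : 0 ≤ b j <;> simp only [hb, if_true, if_false] <;> fun_prop
  · refine differentiable_pi.mpr fun j => ?_
    by_cases hb : 0 ≤ b j <;> simp only [hb, if_true, if_false] <;> fun_prop

lemma diffOn_finset_prod {E : Type*} [NormedAddCommGroup E] [NormedSpace ℂ E]
    {ι : Type*} (u : Finset ι) (g : ι → E → ℂ) (s : Set E)
    (h : ∀ i ∈ u, DifferentiableOn ℂ (g i) s) :
    DifferentiableOn ℂ (fun x => ∏ i ∈ u, g i x) s := by
  classical
  induction u using Finset.induction_on with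
  | empty => simpa using differentiableOn_const 1
  | insert _ _ hni ih =>
    simp only [Finset.prod_insert hni]
    exact (h _ (Finset.mem_insert_self _ _)).mul
      (ih fun i hi => h i (Finset.mem_insert_of_mem hi))

lemma modelGen_diff (l k : ℕ) (a : Fin l → ℤ) (b : Fin k → ℤ) :
    DifferentiableOn ℂ (modelGen l k a b) (modelSet l k) := by
  unfold modelGen
  refine DifferentiableOn.mul ?_ ?_
  · refine diffOn_finset_prod _ _ _ fun i _ => fun x hx => ?_
    exact ((differentiableAt_zpow.mpr (Or.inl (hx i))).comp x
      (by fun_prop : Differentiable ℂ fun x : ModelSpace l k => x.1 i).differentiableAt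
      ).differentiableWithinAt
  · refine diffOn_finset_prod _ _ _ fun j _ => ?_
    by_cases hb : 0 ≤ b j <;> simp only [hb, if_true, if_false] <;>
      exact (by fun_prop : Differentiable ℂ _).differentiableOn

lemma modelGen_equiv (l k : ℕ) (a : Fin l → ℤ) (b : Fin k → ℤ)
    (g : (Fin l → ℂˣ) × (Fin k → ℂˣ)) (x : ModelSpace l k) :
    modelGen l k a b (modelAct l k g x) = modelChar l k a b g * modelGen l k a b x := by
  unfold modelGen modelAct modelChar
  have h1 : ∏ i, ((g.1 i : ℂ) * x.1 i) ^ a i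
      = (∏ i, (g.1 i : ℂ) ^ a i) * ∏ i, x.1 i ^ a i := by
    rw [← Finset.prod_mul_distrib]
    exact Finset.prod_congr rfl fun i _ => mul_zpow _ _ _
  have h2 : (∏ j, if 0 ≤ b j then ((g.2 j : ℂ) * x.2.1 j) ^ (b j).toNat
        else ((((g.2 j)⁻¹ : ℂˣ) : ℂ) * x.2.2.2 j) ^ (-(b j)).toNat)
      = (∏ j, (g.2 j : ℂ) ^ b j) *
        ∏ j, (if 0 ≤ b j then x.2.1 j ^ (b j).toNat else x.2.2.2 j ^ (-(b j)).toNat) := by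
    rw [← Finset.prod_mul_distrib]
    refine Finset.prod_congr rfl fun j _ => ?_
    by_cases hb : 0 ≤ b j
    · rw [if_pos hb, if_pos hb, mul_pow]
      congr 1
      rw [← zpow_natCast, Int.toNat_of_nonneg hb]
    · rw [if_neg hb, if_neg hb, mul_pow]
      congr 1
      have hn : ((-(b j)).toNat : ℤ) = -(b j) := Int.toNat_of_nonneg (by omega)
      rw [Units.val_inv_eq_inv_val, inv_pow, ← zpow_natCast, hn, ← zpow_neg, neg_neg]
  simp only
  rw [h1, h2]
  ring

lemma model_core (l k : ℕ) (a : Fin l → ℤ) (b : Fin k → ℤ)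
    (f : ModelSpace l k → ℂ)
    (hequiv : ∀ g : (Fin l → ℂˣ) × (Fin k → ℂˣ), ∀ x ∈ modelSet l k,
      f (modelAct l k g x) = modelChar l k a b g * f x)
    (x : ModelSpace l k) (hx : x ∈ modelSet l k)
    (hv : ∀ j, x.2.1 j ≠ 0) (hw : ∀ j, x.2.2.2 j ≠ 0) :
    f x = f (modelSec l k b (modelQuot l k x)) * modelGen l k a b x := by
  classical
  set g : (Fin l → ℂˣ) × (Fin k → ℂˣ) :=
    (fun i => Units.mk0 (x.1 i) (hx i),
     fun j => if 0 ≤ b j then Units.mk0 (x.2.1 j) (hv j)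
       else (Units.mk0 (x.2.2.2 j) (hw j))⁻¹) with hg
  have hact : modelAct l k g (modelSec l k b (modelQuot l k x)) = x := by
    unfold modelAct modelSec modelQuot
    refine Prod.ext ?_ (Prod.ext ?_ (Prod.ext rfl ?_))
    · funext i; simp [hg]
    · funext j
      by_cases hb : 0 ≤ b j
      · simp [hg, hb]
      · simp [hg, hb]
        field_simp
        exact mul_div_cancel_left₀ _ (hw j)
    · funext j
      by_cases hb : 0 ≤ b j
      · simp [hg, hb]
        field_simp
        rw [mul_comm (x.2.1 j)]
        exact mul_div_cancel_right₀ _ (hv j)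
      · simp [hg, hb]
  have hchar : modelChar l k a b g = modelGen l k a b x := by
    have hθ : (∏ i, ((g.1 i : ℂ)) ^ a i) = ∏ i, x.1 i ^ a i :=
      Finset.prod_congr rfl fun i _ => by simp [hg]
    have ht : (∏ j, ((g.2 j : ℂ)) ^ b j)
        = ∏ j, (if 0 ≤ b j then x.2.1 j ^ (b j).toNat else x.2.2.2 j ^ (-(b j)).toNat) := by
      refine Finset.prod_congr rfl fun j _ => ?_
      by_cases hb : 0 ≤ b j
      · rw [if_pos hb]
        have hgj : ((g.2 j : ℂ)) = x.2.1 j := by simp [hg, hb]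
        rw [hgj]
        conv_lhs => rw [show b j = (((b j).toNat : ℤ)) from (Int.toNat_of_nonneg hb).symm]
        rw [zpow_natCast]
      · rw [if_neg hb]
        have hgj : ((g.2 j : ℂ)) = (x.2.2.2 j)⁻¹ := by simp [hg, hb]
        rw [hgj, inv_zpow, ← zpow_neg]
        conv_lhs => rw [show -(b j) = (((-(b j)).toNat : ℤ)) from
          (Int.toNat_of_nonneg (by omega)).symm]
        rw [zpow_natCast]
    unfold modelChar modelGen
    rw [hθ, ht]
  have h := hequiv g _ (modelSec_mem l k b (modelQuot l k x))
  rw [hact, hchar] at h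
  rw [h]; ring


open Filter Topology

/-- for the model manifold `X` with quotient `π : X → Y = ℂⁿ` and a
character `χ = ∑ aᵢθᵢ + ∑ bⱼχⱼ`, the `𝒪(Y)`-module
`𝒪_χ = {f holomorphic on X : f(g·x) = χ(g) f(x)}` is free of rank 1, generated by
`(∏ θᵢ^{aᵢ}) · ∏ uⱼ^{|bⱼ|}`: the generator lies in `𝒪_χ`, and every `f ∈ 𝒪_χ` is
uniquely of the form `(h ∘ π) ·` generator with `h` holomorphic on `Y`. -/
theorem stmt14 (l k : ℕ) (a : Fin l → ℤ) (b : Fin k → ℤ) :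
    (DifferentiableOn ℂ (modelGen l k a b) (modelSet l k) ∧
      ∀ g : (Fin l → ℂˣ) × (Fin k → ℂˣ), ∀ x ∈ modelSet l k,
        modelGen l k a b (modelAct l k g x) = modelChar l k a b g * modelGen l k a b x) ∧
    (∀ f : ModelSpace l k → ℂ,
      DifferentiableOn ℂ f (modelSet l k) →
      (∀ g : (Fin l → ℂˣ) × (Fin k → ℂˣ), ∀ x ∈ modelSet l k,
        f (modelAct l k g x) = modelChar l k a b g * f x) →
      ∃! h : (Fin l → ℂ) × (Fin k → ℂ) → ℂ,
        Differentiable ℂ h ∧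
        ∀ x ∈ modelSet l k, f x = h (modelQuot l k x) * modelGen l k a b x) := by
  classical
  refine ⟨⟨modelGen_diff l k a b, fun g x _ => modelGen_equiv l k a b g x⟩, ?_⟩
  intro f hf hequiv
  set H : (Fin l → ℂ) × (Fin k → ℂ) → ℂ := fun y => f (modelSec l k b y) with hH
  have hHdiff : Differentiable ℂ H := fun y =>
    ((hf.differentiableAt ((modelSet_open l k).mem_nhds (modelSec_mem l k b y))).comp y
      ((modelSec_diff l k b) y))
  refine ⟨H, ⟨hHdiff, ?_⟩, ?_⟩
  · intro x hx
    set xe : ℂ → ModelSpace l k := fun ε =>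
      (x.1, fun j => if x.2.1 j = 0 then ε else x.2.1 j, x.2.2.1,
        fun j => if x.2.2.2 j = 0 then ε else x.2.2.2 j) with hxe
    have hxe0 : xe 0 = x := by
      refine Prod.ext rfl (Prod.ext (funext fun j => ?_) (Prod.ext rfl (funext fun j => ?_))) <;>
        · simp only [hxe]; split_ifs with h; exacts [h.symm, rfl]
    have hmem : ∀ ε, xe ε ∈ modelSet l k := fun ε i => hx i
    have hcxe : Continuous xe := by
      refine Continuous.prodMk continuous_const
        (Continuous.prodMk ?_ (Continuous.prodMk continuous_const ?_)) <;>
      · refine continuous_pi fun j => ?_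
        split_ifs
        exacts [continuous_id, continuous_const]
    have hne : ∀ ε : ℂ, ε ≠ 0 →
        f (xe ε) = H (modelQuot l k (xe ε)) * modelGen l k a b (xe ε) := by
      intro ε hε
      have hv : ∀ j, (xe ε).2.1 j ≠ 0 := by
        intro j; simp only [hxe]; split_ifs with h; exacts [hε, h]
      have hw : ∀ j, (xe ε).2.2.2 j ≠ 0 := by
        intro j; simp only [hxe]; split_ifs with h; exacts [hε, h]
      exact model_core l k a b f hequiv (xe ε) (hmem ε) hv hw
    have hfc : ContinuousAt (fun ε => f (xe ε)) 0 := by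
      have hat : ContinuousAt f (xe 0) :=
        (hf.differentiableAt ((modelSet_open l k).mem_nhds
          (by rw [hxe0]; exact hx))).continuousAt
      exact hat.comp hcxe.continuousAt
    have hq : Continuous (modelQuot l k) := by
      unfold modelQuot; fun_prop
    have hgc : ContinuousAt
        (fun ε => H (modelQuot l k (xe ε)) * modelGen l k a b (xe ε)) 0 := by
      have h1 : ContinuousAt (modelGen l k a b) (xe 0) := by
        rw [hxe0]
        exact ((modelGen_diff l k a b).continuousOn).continuousAt
          ((modelSet_open l k).mem_nhds hx)
      exact ContinuousAt.mul
        (((hHdiff.continuous.comp hq).continuousAt).comp hcxe.continuousAt)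
        (h1.comp hcxe.continuousAt)
    have key : f (xe 0) = H (modelQuot l k (xe 0)) * modelGen l k a b (xe 0) := by
      have l1 : Tendsto (fun ε => f (xe ε)) (𝓝[≠] (0:ℂ)) (𝓝 (f (xe 0))) :=
        hfc.continuousWithinAt
      have l2 : Tendsto (fun ε => H (modelQuot l k (xe ε)) * modelGen l k a b (xe ε))
          (𝓝[≠] (0:ℂ)) (𝓝 (H (modelQuot l k (xe 0)) * modelGen l k a b (xe 0))) :=
        hgc.continuousWithinAt
      have l3 : Tendsto (fun ε => f (xe ε)) (𝓝[≠] (0:ℂ))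
          (𝓝 (H (modelQuot l k (xe 0)) * modelGen l k a b (xe 0))) := by
        refine l2.congr' ?_
        filter_upwards [self_mem_nhdsWithin] with ε hε
        exact (hne ε hε).symm
      exact tendsto_nhds_unique l1 l3
    rw [hxe0] at key
    exact key
  · intro h' hh'
    obtain ⟨hd', he'⟩ := hh'
    funext y
    have h0 := he' (modelSec l k b y) (modelSec_mem l k b y)
    rw [modelSec_quot, modelSec_gen, mul_one] at h0
    exact h0.symm
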